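/- arXiv:1812.04224 — 3 statements merged into one kernel-verified Lean document; each statement's English description precedes it below -/
import Mathlib

section
/- Let $n \ge 1$ and $1 \le k \le n$. Let $X = [X_0, X_1]$ and $Y = [Y_0, Y_1]$ be two $n \times n$ real orthogonal matrices, where $X_0, Y_0 \in \mathbb{R}^{n \times k}$ consist of the first $k$ columns of $X$ and $Y$ respectively, and $X_1, Y_1 \in \mathbb{R}^{n \times (n-k)}$ consist of the remaining $n-k$ columns. Then $\|X_0 X_0^T - Y_0 Y_0^T\|_2 = \|X_0^T Y_1\|_2$, where $\|\cdot\|_2$ denotes the spectral (operator) norm. -/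
open Matrix BigOperators

/-- Spectral (operator) norm of a real matrix: the operator norm of the induced
linear map between Euclidean spaces, i.e. the largest singular value. -/
noncomputable def spec {m n : ℕ} (A : Matrix (Fin m) (Fin n) ℝ) : ℝ :=
  ‖LinearMap.toContinuousLinearMap (Matrix.toEuclideanLin A)‖

/-- The submatrix consisting of the first `k` columns of an `n × n` matrix. -/
def firstCols {n : ℕ} (X : Matrix (Fin n) (Fin n) ℝ) (k : ℕ) : Matrix (Fin n) (Fin k) ℝ :=
  Matrix.of fun r j => if h : j.1 < n then X r ⟨j.1, h⟩ else 0

/-- The submatrix consisting of the last `n - a` columns (columns `a+1, …, n`)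
of an `n × n` matrix. -/
def lastCols {n : ℕ} (X : Matrix (Fin n) (Fin n) ℝ) (a : ℕ) : Matrix (Fin n) (Fin (n - a)) ℝ :=
  Matrix.of fun r j => if h : a + j.1 < n then X r ⟨a + j.1, h⟩ else 0

open scoped Matrix.Norms.L2Operator RealInnerProductSpace

lemma spec_eq {m n : ℕ} (A : Matrix (Fin m) (Fin n) ℝ) : spec A = ‖A‖ := rfl


noncomputable def matL {m n : ℕ} (A : Matrix (Fin m) (Fin n) ℝ) :
    EuclideanSpace ℝ (Fin n) →L[ℝ] EuclideanSpace ℝ (Fin m) :=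
  LinearMap.toContinuousLinearMap (Matrix.toEuclideanLin A)

lemma norm_matL {m n : ℕ} (A : Matrix (Fin m) (Fin n) ℝ) : ‖A‖ = ‖matL A‖ := rfl

lemma matL_mul {m n p : ℕ} (A : Matrix (Fin m) (Fin n) ℝ) (B : Matrix (Fin n) (Fin p) ℝ)
    (x : EuclideanSpace ℝ (Fin p)) : matL (A * B) x = matL A (matL B x) := by
  simp [matL, Matrix.toEuclideanLin_apply, Matrix.mulVec_mulVec]

lemma matL_one {m : ℕ} (x : EuclideanSpace ℝ (Fin m)) : matL 1 x = x := by
  simp [matL, Matrix.toEuclideanLin_apply]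

lemma conjT {m n : ℕ} (A : Matrix (Fin m) (Fin n) ℝ) : Aᴴ = Aᵀ := by
  ext i j; simp

lemma matL_adj {m n : ℕ} (A : Matrix (Fin m) (Fin n) ℝ) (x : EuclideanSpace ℝ (Fin m))
    (y : EuclideanSpace ℝ (Fin n)) : ⟪matL Aᵀ x, y⟫ = ⟪x, matL A y⟫ := by
  have h := Matrix.toEuclideanLin_conjTranspose_eq_adjoint A
  rw [conjT] at h
  simp only [matL, LinearMap.coe_toContinuousLinearMap', h]
  exact LinearMap.adjoint_inner_left (Matrix.toEuclideanLin A) y x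

lemma inner_matL_tmul {m n : ℕ} (A : Matrix (Fin m) (Fin n) ℝ) (x : EuclideanSpace ℝ (Fin n)) :
    ⟪x, matL (Aᵀ * A) x⟫ = ‖matL A x‖ ^ 2 := by
  rw [matL_mul, real_inner_comm, matL_adj, real_inner_self_eq_norm_sq]

lemma tnorm_eq {m n : ℕ} (A : Matrix (Fin m) (Fin n) ℝ) : ‖Aᵀ‖ = ‖A‖ := by
  rw [← Matrix.l2_opNorm_conjTranspose A]; congr 1

lemma norm_tmul {m n : ℕ} (A : Matrix (Fin m) (Fin n) ℝ) : ‖Aᵀ * A‖ = ‖A‖ ^ 2 := by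
  rw [sq, ← Matrix.l2_opNorm_conjTranspose_mul_self A]; congr 2

lemma matL_le {m n : ℕ} (A : Matrix (Fin m) (Fin n) ℝ) (x : EuclideanSpace ℝ (Fin n)) :
    ‖matL A x‖ ≤ ‖A‖ * ‖x‖ := (matL A).le_opNorm x

lemma unit_le_norm {m n : ℕ} (A : Matrix (Fin m) (Fin n) ℝ) {x : EuclideanSpace ℝ (Fin n)}
    (hx : ‖x‖ = 1) : ‖matL A x‖ ≤ ‖A‖ := by
  simpa [hx] using matL_le A x

lemma norm_le_of_unit {m n : ℕ} {A : Matrix (Fin m) (Fin n) ℝ} {c : ℝ} (hc : 0 ≤ c)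
    (h : ∀ x : EuclideanSpace ℝ (Fin n), ‖x‖ = 1 → ‖matL A x‖ ≤ c) : ‖A‖ ≤ c :=
  ContinuousLinearMap.opNorm_le_of_unit_norm hc h

lemma mul_isom_left {m n p : ℕ} {U : Matrix (Fin m) (Fin n) ℝ} (hU : Uᵀ * U = 1)
    (M : Matrix (Fin n) (Fin p) ℝ) : ‖U * M‖ = ‖M‖ := by
  have h : (U * M)ᵀ * (U * M) = Mᵀ * M := by
    rw [transpose_mul, Matrix.mul_assoc, ← Matrix.mul_assoc Uᵀ, hU, Matrix.one_mul]
  have h2 : ‖U * M‖ ^ 2 = ‖M‖ ^ 2 := by rw [← norm_tmul, h, norm_tmul]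
  nlinarith [norm_nonneg (U * M), norm_nonneg M]

lemma mul_isom_right {m n p : ℕ} {V : Matrix (Fin n) (Fin p) ℝ} (hV : V * Vᵀ = 1)
    (M : Matrix (Fin m) (Fin n) ℝ) : ‖M * V‖ = ‖M‖ := by
  rw [← tnorm_eq (M * V), transpose_mul, mul_isom_left (by rw [transpose_transpose, hV]),
    tnorm_eq]

lemma norm_le_one_of {m n : ℕ} {U : Matrix (Fin m) (Fin n) ℝ} (hU : Uᵀ * U = 1) : ‖U‖ ≤ 1 := by
  have h1 : ‖(1 : Matrix (Fin n) (Fin n) ℝ)‖ ≤ 1 :=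
    norm_le_of_unit zero_le_one fun x hx => by rw [matL_one, hx]
  have h2 : ‖U‖ ^ 2 ≤ 1 := by rw [← norm_tmul, hU]; exact h1
  nlinarith [norm_nonneg U]

lemma matL_attain {m n : ℕ} (hn : 0 < n) (A : Matrix (Fin m) (Fin n) ℝ) :
    ∃ x : EuclideanSpace ℝ (Fin n), ‖x‖ = 1 ∧ ‖matL A x‖ = ‖A‖ := by
  have hne : (Metric.sphere (0 : EuclideanSpace ℝ (Fin n)) 1).Nonempty := by
    refine ⟨EuclideanSpace.single ⟨0, hn⟩ (1 : ℝ), ?_⟩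
    simp [EuclideanSpace.norm_single]
  obtain ⟨x, hx, hmax⟩ := (isCompact_sphere (0 : EuclideanSpace ℝ (Fin n)) 1).exists_isMaxOn hne
    ((matL A).continuous.norm.continuousOn)
  have hx1 : ‖x‖ = 1 := by simpa using hx
  refine ⟨x, hx1, le_antisymm (unit_le_norm A hx1) ?_⟩
  refine norm_le_of_unit (norm_nonneg _) fun y hy => ?_
  exact hmax (by simpa using hy)

lemma matL_sub {m n : ℕ} (A B : Matrix (Fin m) (Fin n) ℝ) (x : EuclideanSpace ℝ (Fin n)) :
    matL (A - B) x = matL A x - matL B x := by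
  simp [matL, Matrix.toEuclideanLin_apply, Matrix.sub_mulVec]

lemma clm_attain {m n : ℕ} (hn : 0 < n)
    (T : EuclideanSpace ℝ (Fin n) →L[ℝ] EuclideanSpace ℝ (Fin m)) :
    ∃ x : EuclideanSpace ℝ (Fin n), ‖x‖ = 1 ∧ ‖T x‖ = ‖T‖ := by
  have hne : (Metric.sphere (0 : EuclideanSpace ℝ (Fin n)) 1).Nonempty := by
    refine ⟨EuclideanSpace.single ⟨0, hn⟩ (1 : ℝ), ?_⟩
    simp [EuclideanSpace.norm_single]
  obtain ⟨x, hx, hmax⟩ := (isCompact_sphere (0 : EuclideanSpace ℝ (Fin n)) 1).exists_isMaxOn hne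
    (T.continuous.norm.continuousOn)
  have hx1 : ‖x‖ = 1 := by simpa using hx
  refine ⟨x, hx1, le_antisymm (T.unit_le_opNorm x hx1.le) ?_⟩
  refine ContinuousLinearMap.opNorm_le_of_unit_norm (norm_nonneg _) fun y hy => ?_
  exact hmax (by simpa using hy)

lemma exists_small {k : ℕ} (hk : 0 < k) (A : Matrix (Fin k) (Fin k) ℝ)
    (u : EuclideanSpace ℝ (Fin k)) (hu : ‖u‖ = 1) :
    ∃ v : EuclideanSpace ℝ (Fin k), ‖v‖ = 1 ∧ ‖matL A v‖ ≤ ‖matL Aᵀ u‖ := by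
  by_cases hinj : Function.Injective (Matrix.toEuclideanLin A)
  · -- invertible case
    have hsurj : Function.Surjective (Matrix.toEuclideanLin A) :=
      (LinearMap.injective_iff_surjective).mp hinj
    let e := LinearEquiv.ofBijective (Matrix.toEuclideanLin A) ⟨hinj, hsurj⟩
    let S := LinearMap.toContinuousLinearMap e.symm.toLinearMap
    obtain ⟨z, hz1, hz2⟩ := clm_attain hk S
    have hSz : S z ≠ 0 := by
      intro h
      have : z = 0 := by
        have := congrArg e (show e.symm z = 0 from h)
        simpa using this
      rw [this] at hz1; simp at hz1
    have hSpos : 0 < ‖S‖ := by rw [← hz2]; exact norm_pos_iff.mpr hSz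
    refine ⟨‖S z‖⁻¹ • S z, ?_, ?_⟩
    · rw [norm_smul, norm_inv, Real.norm_eq_abs, abs_of_nonneg (norm_nonneg _),
        inv_mul_cancel₀ (norm_ne_zero_iff.mpr hSz)]
    · have hAv : matL A (‖S z‖⁻¹ • S z) = ‖S z‖⁻¹ • z := by
        have : Matrix.toEuclideanLin A (S z) = z := by
          show e (e.symm z) = z
          simp
        simp only [_root_.map_smul]
        rw [show matL A (S z) = z from this]
      rw [hAv, norm_smul, norm_inv, Real.norm_eq_abs, abs_of_nonneg (norm_nonneg _), hz2]
      -- ⊢ ‖S‖⁻¹ * ‖z‖ ≤ ‖matL Aᵀ u‖ ; ‖z‖ = 1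
      rw [hz1, mul_one]
      -- 1 ≤ ‖matL Aᵀ u‖ * ‖S‖
      have key : 1 ≤ ‖matL Aᵀ u‖ * ‖S‖ := by
        have h1 : (1 : ℝ) = ⟪u, u⟫ := by rw [real_inner_self_eq_norm_sq, hu]; ring
        have h2 : Matrix.toEuclideanLin A (S u) = u := by show e (e.symm u) = u; simp
        have h3 : ⟪u, u⟫ = ⟪matL Aᵀ u, S u⟫ := by
          have := matL_adj A u (S u)
          rw [this]
          show ⟪u, u⟫ = ⟪u, Matrix.toEuclideanLin A (S u)⟫
          rw [h2]
        have h4 : ⟪matL Aᵀ u, S u⟫ ≤ ‖matL Aᵀ u‖ * ‖S u‖ := real_inner_le_norm _ _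
        have h5 : ‖S u‖ ≤ ‖S‖ := by
          have := S.le_opNorm u
          rw [hu, mul_one] at this
          exact this
        nlinarith [norm_nonneg (matL Aᵀ u)]
      rw [inv_le_iff_one_le_mul₀ hSpos] -- might not be the right lemma name
      linarith [key]
  · -- non-injective case
    have : ∃ v₀ : EuclideanSpace ℝ (Fin k), v₀ ≠ 0 ∧ Matrix.toEuclideanLin A v₀ = 0 := by
      rw [Function.not_injective_iff] at hinj
      obtain ⟨a, b, hab, hne⟩ := hinj
      exact ⟨a - b, sub_ne_zero.mpr hne, by rw [map_sub, hab, sub_self]⟩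
    obtain ⟨v₀, hv0, hAv0⟩ := this
    refine ⟨‖v₀‖⁻¹ • v₀, ?_, ?_⟩
    · rw [norm_smul, norm_inv, Real.norm_eq_abs, abs_of_nonneg (norm_nonneg _),
        inv_mul_cancel₀ (norm_ne_zero_iff.mpr hv0)]
    · have : matL A (‖v₀‖⁻¹ • v₀) = 0 := by
        simp only [_root_.map_smul]
        have h0 : matL A v₀ = 0 := hAv0
        rw [h0, smul_zero]
      rw [this]; simp

lemma normBC_le {k p q : ℕ} (hk : 0 < k) (A : Matrix (Fin k) (Fin k) ℝ)
    (B : Matrix (Fin k) (Fin q) ℝ) (C : Matrix (Fin p) (Fin k) ℝ)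
    (hB : A * Aᵀ + B * Bᵀ = 1) (hC : Aᵀ * A + Cᵀ * C = 1) : ‖B‖ ≤ ‖C‖ := by
  obtain ⟨u, hu1, hu2⟩ := clm_attain hk (matL Bᵀ)
  have hBu : ‖matL Bᵀ u‖ ^ 2 = 1 - ‖matL Aᵀ u‖ ^ 2 := by
    have e1 : ⟪u, matL (B * Bᵀ) u⟫ = ‖matL Bᵀ u‖ ^ 2 := by
      have := inner_matL_tmul Bᵀ u
      rwa [transpose_transpose] at this
    have e2 : ⟪u, matL (A * Aᵀ) u⟫ = ‖matL Aᵀ u‖ ^ 2 := by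
      have := inner_matL_tmul Aᵀ u
      rwa [transpose_transpose] at this
    have e3 : B * Bᵀ = 1 - A * Aᵀ := by rw [← hB]; abel
    rw [e3] at e1
    rw [matL_sub, inner_sub_right, matL_one, real_inner_self_eq_norm_sq, hu1] at e1
    rw [e2] at e1
    linarith [e1]
  obtain ⟨v, hv1, hv2⟩ := exists_small hk A u hu1
  have hCv : ‖matL C v‖ ^ 2 = 1 - ‖matL A v‖ ^ 2 := by
    have e1 : ⟪v, matL (Cᵀ * C) v⟫ = ‖matL C v‖ ^ 2 := inner_matL_tmul C v
    have e2 : ⟪v, matL (Aᵀ * A) v⟫ = ‖matL A v‖ ^ 2 := inner_matL_tmul A v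
    have e3 : Cᵀ * C = 1 - Aᵀ * A := by rw [← hC]; abel
    rw [e3] at e1
    rw [matL_sub, inner_sub_right, matL_one, real_inner_self_eq_norm_sq, hv1] at e1
    rw [e2] at e1
    linarith [e1]
  have hBnorm : ‖B‖ = ‖matL Bᵀ u‖ := by rw [hu2, ← norm_matL, tnorm_eq]
  have hCge : ‖matL C v‖ ≤ ‖C‖ := unit_le_norm C hv1
  have : ‖matL Bᵀ u‖ ^ 2 ≤ ‖matL C v‖ ^ 2 := by nlinarith [norm_nonneg (matL A v), norm_nonneg (matL Aᵀ u)]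
  nlinarith [norm_nonneg (matL Bᵀ u), norm_nonneg (matL C v)]

lemma normBC {k p q : ℕ} (hk : 0 < k) (A : Matrix (Fin k) (Fin k) ℝ)
    (B : Matrix (Fin k) (Fin q) ℝ) (C : Matrix (Fin p) (Fin k) ℝ)
    (hB : A * Aᵀ + B * Bᵀ = 1) (hC : Aᵀ * A + Cᵀ * C = 1) : ‖B‖ = ‖C‖ := by
  refine le_antisymm (normBC_le hk A B C hB hC) ?_
  have h := normBC_le hk Aᵀ Cᵀ Bᵀ (by rwa [transpose_transpose]) (by rwa [transpose_transpose])
  rwa [tnorm_eq, tnorm_eq] at h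

lemma matL_add {m n : ℕ} (A B : Matrix (Fin m) (Fin n) ℝ) (x : EuclideanSpace ℝ (Fin n)) :
    matL (A + B) x = matL A x + matL B x := by
  simp [matL, Matrix.toEuclideanLin_apply, Matrix.add_mulVec]

lemma cross {n k q p : ℕ} {X₀ : Matrix (Fin n) (Fin k) ℝ} {X₁ : Matrix (Fin n) (Fin q) ℝ}
    (h0 : X₀ᵀ * X₀ = 1) (h1 : X₁ᵀ * X₁ = 1) (h01 : X₀ᵀ * X₁ = 0)
    (R : Matrix (Fin k) (Fin p) ℝ) (S : Matrix (Fin q) (Fin p) ℝ) :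
    (X₀ * R - X₁ * S)ᵀ * (X₀ * R - X₁ * S) = Rᵀ * R + Sᵀ * S := by
  have h10 : X₁ᵀ * X₀ = 0 := by
    have h := congrArg Matrix.transpose h01
    rwa [transpose_mul, transpose_transpose, transpose_zero] at h
  rw [transpose_sub, transpose_mul, transpose_mul, Matrix.sub_mul, Matrix.mul_sub,
    Matrix.mul_sub]
  rw [show Rᵀ * X₀ᵀ * (X₀ * R) = Rᵀ * R from by
      rw [Matrix.mul_assoc, ← Matrix.mul_assoc X₀ᵀ, h0, Matrix.one_mul],
    show Rᵀ * X₀ᵀ * (X₁ * S) = 0 from by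
      rw [Matrix.mul_assoc, ← Matrix.mul_assoc X₀ᵀ, h01, Matrix.zero_mul, Matrix.mul_zero],
    show Sᵀ * X₁ᵀ * (X₀ * R) = 0 from by
      rw [Matrix.mul_assoc, ← Matrix.mul_assoc X₁ᵀ, h10, Matrix.zero_mul, Matrix.mul_zero],
    show Sᵀ * X₁ᵀ * (X₁ * S) = Sᵀ * S from by
      rw [Matrix.mul_assoc, ← Matrix.mul_assoc X₁ᵀ, h1, Matrix.one_mul]]
  abel


lemma firstCols_apply (hkn : k ≤ n) (X : Matrix (Fin n) (Fin n) ℝ) (r : Fin n) (j : Fin k) :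
    firstCols X k r j = X r ⟨j.1, lt_of_lt_of_le j.2 hkn⟩ := by
  simp only [firstCols, Matrix.of_apply, dif_pos (lt_of_lt_of_le j.2 hkn)]

lemma lastCols_apply (hkn : k ≤ n) (X : Matrix (Fin n) (Fin n) ℝ) (r : Fin n) (j : Fin (n - k)) :
    lastCols X k r j = X r ⟨k + j.1, by omega⟩ := by
  have h : k + j.1 < n := by have := j.2; omega
  simp only [lastCols, Matrix.of_apply, dif_pos h]

lemma firstCols_tmul_firstCols (hkn : k ≤ n) {X : Matrix (Fin n) (Fin n) ℝ} (hX : Xᵀ * X = 1) :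
    (firstCols X k)ᵀ * firstCols X k = 1 := by
  ext i j
  have hi : (i : ℕ) < n := lt_of_lt_of_le i.2 hkn
  have hj : (j : ℕ) < n := lt_of_lt_of_le j.2 hkn
  have h1 := congrFun (congrFun hX ⟨i, hi⟩) ⟨j, hj⟩
  rw [Matrix.mul_apply] at h1
  simp only [transpose_apply] at h1
  rw [Matrix.mul_apply]
  simp only [transpose_apply, firstCols_apply hkn]
  rw [h1, Matrix.one_apply, Matrix.one_apply]
  simp [Fin.ext_iff]

lemma firstCols_tmul_lastCols (hkn : k ≤ n) {X : Matrix (Fin n) (Fin n) ℝ} (hX : Xᵀ * X = 1) :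
    (firstCols X k)ᵀ * lastCols X k = 0 := by
  ext i j
  have hi : (i : ℕ) < n := lt_of_lt_of_le i.2 hkn
  have hj : k + (j : ℕ) < n := by have := j.2; omega
  have h1 := congrFun (congrFun hX ⟨i, hi⟩) ⟨k + j, hj⟩
  rw [Matrix.mul_apply] at h1
  simp only [transpose_apply] at h1
  rw [Matrix.mul_apply]
  simp only [transpose_apply, firstCols_apply hkn, lastCols_apply hkn]
  rw [h1, Matrix.one_apply_ne]
  · simp
  · intro h
    have := congrArg Fin.val h
    simp at this
    omega

lemma lastCols_tmul_lastCols (hkn : k ≤ n) {X : Matrix (Fin n) (Fin n) ℝ} (hX : Xᵀ * X = 1) :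
    (lastCols X k)ᵀ * lastCols X k = 1 := by
  ext i j
  have hi : k + (i : ℕ) < n := by have := i.2; omega
  have hj : k + (j : ℕ) < n := by have := j.2; omega
  have h1 := congrFun (congrFun hX ⟨k + i, hi⟩) ⟨k + j, hj⟩
  rw [Matrix.mul_apply] at h1
  simp only [transpose_apply] at h1
  rw [Matrix.mul_apply]
  simp only [transpose_apply, lastCols_apply hkn]
  rw [h1, Matrix.one_apply, Matrix.one_apply]
  simp [Fin.ext_iff]

lemma cols_sum (hkn : k ≤ n) {X : Matrix (Fin n) (Fin n) ℝ} (hX' : X * Xᵀ = 1) :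
    firstCols X k * (firstCols X k)ᵀ + lastCols X k * (lastCols X k)ᵀ = 1 := by
  ext r s
  have h1 := congrFun (congrFun hX' r) s
  rw [Matrix.mul_apply] at h1
  simp only [transpose_apply] at h1
  rw [Matrix.add_apply, Matrix.mul_apply, Matrix.mul_apply]
  simp only [transpose_apply]
  rw [← h1]
  set g : ℕ → ℝ := fun j => if h : j < n then X r ⟨j, h⟩ * X s ⟨j, h⟩ else 0 with hg
  have key : (∑ j : Fin n, g j) = (∑ j : Fin k, g j) + ∑ j : Fin (n - k), g (k + j) := by
    rw [Fin.sum_univ_eq_sum_range g, Fin.sum_univ_eq_sum_range g,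
      Fin.sum_univ_eq_sum_range (fun j => g (k + j)) (n - k),
      congrArg Finset.range (show n = k + (n - k) by omega), Finset.sum_range_add]
  have eA : (∑ j : Fin k, firstCols X k r j * firstCols X k s j) = ∑ j : Fin k, g j := by
    refine Finset.sum_congr rfl fun j _ => ?_
    rw [firstCols_apply hkn, firstCols_apply hkn, hg]
    simp only
    rw [dif_pos (lt_of_lt_of_le j.2 hkn)]
  have eB : (∑ j : Fin (n - k), lastCols X k r j * lastCols X k s j)
      = ∑ j : Fin (n - k), g (k + j) := by
    refine Finset.sum_congr rfl fun j _ => ?_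
    rw [lastCols_apply hkn, lastCols_apply hkn, hg]
    simp only
    rw [dif_pos (show k + (j : ℕ) < n by have := j.2; omega)]
  have eC : (∑ j : Fin n, X r j * X s j) = ∑ j : Fin n, g j := by
    refine Finset.sum_congr rfl fun j _ => ?_
    rw [hg]
    simp only
    rw [dif_pos j.2]
  rw [eA, eB, eC, key]

set_option maxHeartbeats 1000000 in
theorem stmt1 {n k : ℕ} (hn : 1 ≤ n) (hk : 1 ≤ k) (hkn : k ≤ n)
    (X Y : Matrix (Fin n) (Fin n) ℝ)
    (hX : Xᵀ * X = 1) (hX' : X * Xᵀ = 1)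
    (hY : Yᵀ * Y = 1) (hY' : Y * Yᵀ = 1) :
    spec (firstCols X k * (firstCols X k)ᵀ - firstCols Y k * (firstCols Y k)ᵀ) =
      spec ((firstCols X k)ᵀ * lastCols Y k) := by
  rw [spec_eq, spec_eq]
  set X₀ := firstCols X k with hX₀def
  set X₁ := lastCols X k with hX₁def
  set Y₀ := firstCols Y k with hY₀def
  set Y₁ := lastCols Y k with hY₁def
  have hX0 : X₀ᵀ * X₀ = 1 := firstCols_tmul_firstCols hkn hX
  have hX1 : X₁ᵀ * X₁ = 1 := lastCols_tmul_lastCols hkn hX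
  have hX01 : X₀ᵀ * X₁ = 0 := firstCols_tmul_lastCols hkn hX
  have hXs : X₀ * X₀ᵀ + X₁ * X₁ᵀ = 1 := cols_sum hkn hX'
  have hY0 : Y₀ᵀ * Y₀ = 1 := firstCols_tmul_firstCols hkn hY
  have hY1 : Y₁ᵀ * Y₁ = 1 := lastCols_tmul_lastCols hkn hY
  have hY01 : Y₀ᵀ * Y₁ = 0 := firstCols_tmul_lastCols hkn hY
  have hYs : Y₀ * Y₀ᵀ + Y₁ * Y₁ᵀ = 1 := cols_sum hkn hY'
  have hX10 : X₁ᵀ * X₀ = 0 := by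
    have h := congrArg Matrix.transpose hX01
    rwa [transpose_mul, transpose_transpose, transpose_zero] at h
  set B := X₀ᵀ * Y₁ with hBdef
  set C := X₁ᵀ * Y₀ with hCdef
  set A := X₀ᵀ * Y₀ with hAdef
  set M := X₀ * X₀ᵀ - Y₀ * Y₀ᵀ with hMdef
  -- lower bound : ‖B‖ ≤ ‖M‖
  have hB_eq : X₀ᵀ * M * Y₁ = B := by
    rw [hMdef, Matrix.mul_sub, Matrix.sub_mul]
    rw [show X₀ᵀ * (X₀ * X₀ᵀ) * Y₁ = B from by
        rw [← Matrix.mul_assoc, hX0, Matrix.one_mul]]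
    rw [show X₀ᵀ * (Y₀ * Y₀ᵀ) * Y₁ = 0 from by
        rw [Matrix.mul_assoc, Matrix.mul_assoc, hY01, Matrix.mul_zero, Matrix.mul_zero]]
    rw [sub_zero]
  have hC_eq : X₁ᵀ * M * Y₀ = -C := by
    rw [hMdef, Matrix.mul_sub, Matrix.sub_mul]
    rw [show X₁ᵀ * (X₀ * X₀ᵀ) * Y₀ = 0 from by
        rw [← Matrix.mul_assoc, hX10, Matrix.zero_mul, Matrix.zero_mul]]
    rw [show X₁ᵀ * (Y₀ * Y₀ᵀ) * Y₀ = C from by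
        rw [Matrix.mul_assoc, Matrix.mul_assoc, hY0, Matrix.mul_one]]
    rw [zero_sub]
  have hnX0 : ‖X₀ᵀ‖ ≤ 1 := by rw [tnorm_eq]; exact norm_le_one_of hX0
  have hnX1 : ‖X₁ᵀ‖ ≤ 1 := by rw [tnorm_eq]; exact norm_le_one_of hX1
  have hnY0 : ‖Y₀‖ ≤ 1 := norm_le_one_of hY0
  have hnY1 : ‖Y₁‖ ≤ 1 := norm_le_one_of hY1
  have hlB : ‖B‖ ≤ ‖M‖ := by
    rw [← hB_eq]
    have m1 : ‖X₀ᵀ * M * Y₁‖ ≤ ‖X₀ᵀ * M‖ * ‖Y₁‖ := Matrix.l2_opNorm_mul _ _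
    have m2 : ‖X₀ᵀ * M‖ ≤ ‖X₀ᵀ‖ * ‖M‖ := Matrix.l2_opNorm_mul _ _
    nlinarith [norm_nonneg (X₀ᵀ * M), norm_nonneg M, norm_nonneg Y₁, norm_nonneg X₀ᵀ,
      norm_nonneg (X₀ᵀ * M * Y₁)]
  have hlC : ‖C‖ ≤ ‖M‖ := by
    rw [show ‖C‖ = ‖X₁ᵀ * M * Y₀‖ from by rw [hC_eq, norm_neg]]
    have m1 : ‖X₁ᵀ * M * Y₀‖ ≤ ‖X₁ᵀ * M‖ * ‖Y₀‖ := Matrix.l2_opNorm_mul _ _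
    have m2 : ‖X₁ᵀ * M‖ ≤ ‖X₁ᵀ‖ * ‖M‖ := Matrix.l2_opNorm_mul _ _
    nlinarith [norm_nonneg (X₁ᵀ * M), norm_nonneg M, norm_nonneg Y₀, norm_nonneg X₁ᵀ,
      norm_nonneg (X₁ᵀ * M * Y₀)]
  -- ‖B‖ = ‖C‖
  have hAB : A * Aᵀ + B * Bᵀ = 1 := by
    have e : A * Aᵀ + B * Bᵀ = X₀ᵀ * ((Y₀ * Y₀ᵀ + Y₁ * Y₁ᵀ) * X₀) := by
      rw [hAdef, hBdef]
      simp only [transpose_mul, transpose_transpose, Matrix.mul_add, Matrix.add_mul,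
        Matrix.mul_assoc]
    rw [e, hYs, Matrix.one_mul, hX0]
  have hAC : Aᵀ * A + Cᵀ * C = 1 := by
    have e : Aᵀ * A + Cᵀ * C = Y₀ᵀ * ((X₀ * X₀ᵀ + X₁ * X₁ᵀ) * Y₀) := by
      rw [hAdef, hCdef]
      simp only [transpose_mul, transpose_transpose, Matrix.mul_add, Matrix.add_mul,
        Matrix.mul_assoc]
    rw [e, hXs, Matrix.one_mul, hY0]
  have hBC : ‖B‖ = ‖C‖ := normBC hk A B C hAB hAC
  -- upper bound
  have hdecomp : X₀ * (B * Y₁ᵀ) - X₁ * (C * Y₀ᵀ) = M := by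
    have eY : Y₁ * Y₁ᵀ = 1 - Y₀ * Y₀ᵀ := by rw [← hYs]; abel
    have eX : X₁ * X₁ᵀ = 1 - X₀ * X₀ᵀ := by rw [← hXs]; abel
    calc X₀ * (B * Y₁ᵀ) - X₁ * (C * Y₀ᵀ)
        = (X₀ * X₀ᵀ) * (Y₁ * Y₁ᵀ) - (X₁ * X₁ᵀ) * (Y₀ * Y₀ᵀ) := by
          rw [hBdef, hCdef]
          simp only [Matrix.mul_assoc]
      _ = (X₀ * X₀ᵀ) * (1 - Y₀ * Y₀ᵀ) - (1 - X₀ * X₀ᵀ) * (Y₀ * Y₀ᵀ) := by rw [eY, eX]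
      _ = M := by
          rw [Matrix.mul_sub, Matrix.sub_mul, Matrix.mul_one, Matrix.one_mul, hMdef]
          abel
  have key : Mᵀ * M = (B * Y₁ᵀ)ᵀ * (B * Y₁ᵀ) + (C * Y₀ᵀ)ᵀ * (C * Y₀ᵀ) := by
    rw [← hdecomp]
    exact cross hX0 hX1 hX01 _ _
  have hub : ‖M‖ ≤ ‖B‖ := by
    refine norm_le_of_unit (norm_nonneg B) fun x hx1 => ?_
    have h2 : ‖matL M x‖ ^ 2 = ‖matL (B * Y₁ᵀ) x‖ ^ 2 + ‖matL (C * Y₀ᵀ) x‖ ^ 2 := by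
      rw [← inner_matL_tmul M x, key, matL_add, inner_add_right, inner_matL_tmul,
        inner_matL_tmul]
    have h3 : ‖matL (B * Y₁ᵀ) x‖ ≤ ‖B‖ * ‖matL Y₁ᵀ x‖ := by
      rw [matL_mul]; exact matL_le _ _
    have h4 : ‖matL (C * Y₀ᵀ) x‖ ≤ ‖C‖ * ‖matL Y₀ᵀ x‖ := by
      rw [matL_mul]; exact matL_le _ _
    have h5 : ‖matL Y₁ᵀ x‖ ^ 2 + ‖matL Y₀ᵀ x‖ ^ 2 = 1 := by
      have e1 : ⟪x, matL (Y₁ * Y₁ᵀ) x⟫ = ‖matL Y₁ᵀ x‖ ^ 2 := by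
        have h := inner_matL_tmul Y₁ᵀ x; rwa [transpose_transpose] at h
      have e2 : ⟪x, matL (Y₀ * Y₀ᵀ) x⟫ = ‖matL Y₀ᵀ x‖ ^ 2 := by
        have h := inner_matL_tmul Y₀ᵀ x; rwa [transpose_transpose] at h
      have e3 : Y₁ * Y₁ᵀ + Y₀ * Y₀ᵀ = 1 := by rw [← hYs]; abel
      calc ‖matL Y₁ᵀ x‖ ^ 2 + ‖matL Y₀ᵀ x‖ ^ 2
          = ⟪x, matL (Y₁ * Y₁ᵀ + Y₀ * Y₀ᵀ) x⟫ := by rw [matL_add, inner_add_right, e1, e2]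
        _ = 1 := by rw [e3, matL_one, real_inner_self_eq_norm_sq, hx1, one_pow]
    rw [← hBC] at h4
    have s3 : ‖matL (B * Y₁ᵀ) x‖ ^ 2 ≤ (‖B‖ * ‖matL Y₁ᵀ x‖) ^ 2 :=
      pow_le_pow_left₀ (norm_nonneg _) h3 2
    have s4 : ‖matL (C * Y₀ᵀ) x‖ ^ 2 ≤ (‖B‖ * ‖matL Y₀ᵀ x‖) ^ 2 :=
      pow_le_pow_left₀ (norm_nonneg _) h4 2
    have e34 : (‖B‖ * ‖matL Y₁ᵀ x‖) ^ 2 + (‖B‖ * ‖matL Y₀ᵀ x‖) ^ 2 = ‖B‖ ^ 2 := by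
      rw [mul_pow, mul_pow, ← mul_add, h5, mul_one]
    have sB : ‖matL M x‖ ^ 2 ≤ ‖B‖ ^ 2 := by linarith [s3, s4, h2, e34]
    nlinarith [sB, norm_nonneg (matL M x), norm_nonneg B]
  exact le_antisymm hub hlB
end

section
/- Let $n \ge 1$ and $1 \le k \le d \le n$. Let $E \in \mathbb{R}^{n \times d}$ and $\hat{E} \in \mathbb{R}^{n \times k}$ both have orthonormal columns, and let $E^{\perp} \in \mathbb{R}^{n \times (n-d)}$ be a matrix with orthonormal columns whose column space is the orthogonal complement of the column space of $E$. Then the squared PIP loss satisfies $\|E E^T - \hat{E} \hat{E}^T\|_F^2 = d - k + 2 \|\hat{E}^T E^{\perp}\|_F^2$. -/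
open Matrix BigOperators

/-- Frobenius norm of a real matrix. -/
noncomputable def frob {m n : Type*} [Fintype m] [Fintype n] (A : Matrix m n ℝ) : ℝ :=
  Real.sqrt (∑ i, ∑ j, (A i j) ^ 2)

lemma frob_sq {m n : Type*} [Fintype m] [Fintype n] (A : Matrix m n ℝ) :
    frob A ^ 2 = (A * Aᵀ).trace := by
  unfold frob
  rw [Real.sq_sqrt (by positivity)]
  simp [Matrix.trace, Matrix.diag, Matrix.mul_apply, Matrix.transpose_apply, sq]

theorem stmt3 {n d k : ℕ} (hk : 1 ≤ k) (hkd : k ≤ d) (hdn : d ≤ n)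
    (E : Matrix (Fin n) (Fin d) ℝ) (Ehat : Matrix (Fin n) (Fin k) ℝ)
    (Eperp : Matrix (Fin n) (Fin (n - d)) ℝ)
    (hE : Eᵀ * E = 1) (hEhat : Ehatᵀ * Ehat = 1) (hEperp : Eperpᵀ * Eperp = 1)
    (horth : Eᵀ * Eperp = 0)
    (hspan : E * Eᵀ + Eperp * Eperpᵀ = 1) :
    frob (E * Eᵀ - Ehat * Ehatᵀ) ^ 2 =
      (d : ℝ) - (k : ℝ) + 2 * frob (Ehatᵀ * Eperp) ^ 2 := by
  have hPsym : (E * Eᵀ)ᵀ = E * Eᵀ := by simp [Matrix.transpose_mul]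
  have hQsym : (Ehat * Ehatᵀ)ᵀ = Ehat * Ehatᵀ := by simp [Matrix.transpose_mul]
  have htrP : (E * Eᵀ).trace = (d : ℝ) := by
    rw [Matrix.trace_mul_comm, hE, Matrix.trace_one]; simp
  have htrQ : (Ehat * Ehatᵀ).trace = (k : ℝ) := by
    rw [Matrix.trace_mul_comm, hEhat, Matrix.trace_one]; simp
  have hPP : E * Eᵀ * (E * Eᵀ) = E * Eᵀ := by
    calc E * Eᵀ * (E * Eᵀ) = E * ((Eᵀ * E) * Eᵀ) := by
          rw [Matrix.mul_assoc, Matrix.mul_assoc]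
      _ = E * Eᵀ := by rw [hE, Matrix.one_mul]
  have hQQ : Ehat * Ehatᵀ * (Ehat * Ehatᵀ) = Ehat * Ehatᵀ := by
    calc Ehat * Ehatᵀ * (Ehat * Ehatᵀ) = Ehat * ((Ehatᵀ * Ehat) * Ehatᵀ) := by
          rw [Matrix.mul_assoc, Matrix.mul_assoc]
      _ = Ehat * Ehatᵀ := by rw [hEhat, Matrix.one_mul]
  have ht1 : ((Ehatᵀ * E) * (Ehatᵀ * E)ᵀ).trace = (E * Eᵀ * (Ehat * Ehatᵀ)).trace := by
    rw [Matrix.transpose_mul, Matrix.transpose_transpose,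
      Matrix.mul_assoc (Ehatᵀ) E (Eᵀ * Ehat), ← Matrix.mul_assoc E Eᵀ Ehat,
      Matrix.trace_mul_comm, Matrix.mul_assoc]
  have ht2 : ((Ehatᵀ * Eperp) * (Ehatᵀ * Eperp)ᵀ).trace
      = (Ehatᵀ * (Eperp * Eperpᵀ) * Ehat).trace := by
    rw [Matrix.transpose_mul, Matrix.transpose_transpose, Matrix.mul_assoc,
      Matrix.mul_assoc, Matrix.mul_assoc]
  have hsum : (E * Eᵀ * (Ehat * Ehatᵀ)).trace
      + ((Ehatᵀ * Eperp) * (Ehatᵀ * Eperp)ᵀ).trace = (k : ℝ) := by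
    rw [← ht1, ht2, Matrix.transpose_mul, Matrix.transpose_transpose]
    rw [Matrix.mul_assoc (Ehatᵀ) E (Eᵀ * Ehat), ← Matrix.mul_assoc E Eᵀ Ehat,
      ← Matrix.mul_assoc (Ehatᵀ) (E * Eᵀ) Ehat]
    rw [← Matrix.trace_add]
    rw [show Ehatᵀ * (E * Eᵀ) * Ehat + Ehatᵀ * (Eperp * Eperpᵀ) * Ehat
        = Ehatᵀ * (E * Eᵀ + Eperp * Eperpᵀ) * Ehat by
      rw [Matrix.mul_add, Matrix.add_mul]]
    rw [hspan, Matrix.mul_one, hEhat, Matrix.trace_one]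
    simp
  rw [frob_sq, frob_sq]
  rw [Matrix.transpose_sub, hPsym, hQsym]
  rw [show (E * Eᵀ - Ehat * Ehatᵀ) * (E * Eᵀ - Ehat * Ehatᵀ)
      = E * Eᵀ * (E * Eᵀ) - E * Eᵀ * (Ehat * Ehatᵀ)
        - Ehat * Ehatᵀ * (E * Eᵀ) + Ehat * Ehatᵀ * (Ehat * Ehatᵀ) by
    rw [Matrix.sub_mul, Matrix.mul_sub, Matrix.mul_sub]; abel]
  rw [hPP, hQQ, Matrix.trace_add, Matrix.trace_sub, Matrix.trace_sub, htrP, htrQ]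
  rw [Matrix.trace_mul_comm (Ehat * Ehatᵀ) (E * Eᵀ)]
  linarith [hsum]
end

section
/- Let $n \ge 1$ and $1 \le k \le n$. Let $X$ and $Y$ be $n \times n$ real orthogonal matrices, and let $c_1 \ge c_2 \ge \cdots \ge c_k \ge c_{k+1} = 0$ be nonnegative reals. Writing $X_{\cdot,1:i}$ for the first $i$ columns of $X$, $X_{\cdot,i+1:n}$ for the last $n-i$ columns, and $X_0 = X_{\cdot,1:k}$, $Y_0 = Y_{\cdot,1:k}$, and $C = \mathrm{diag}(c_1, \dots, c_k)$, it holds that $\|X_0 C X_0^T - Y_0 C Y_0^T\|_F \le \sqrt{2}\, \sum_{i=1}^{k} (c_i - c_{i+1})\, \|Y_{\cdot,1:i}^T\, X_{\cdot,i+1:n}\|_F$. -/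
open Matrix BigOperators

namespace Aux


noncomputable def toEuc {m n : Type*} [Fintype m] [Fintype n] (A : Matrix m n ℝ) :
    EuclideanSpace ℝ (m × n) := WithLp.toLp 2 (fun p : m × n => A p.1 p.2)

lemma frob_eq_norm {m n : Type*} [Fintype m] [Fintype n] (A : Matrix m n ℝ) :
    frob A = ‖toEuc A‖ := by
  rw [EuclideanSpace.norm_eq]
  simp [frob, toEuc, Fintype.sum_prod_type, Real.norm_eq_abs, sq_abs]

lemma frob_sum_le {m n ι : Type*} [Fintype m] [Fintype n] (s : Finset ι)
    (f : ι → Matrix m n ℝ) : frob (∑ i ∈ s, f i) ≤ ∑ i ∈ s, frob (f i) := by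
  have h : toEuc (∑ i ∈ s, f i) = ∑ i ∈ s, toEuc (f i) := by
    ext p
    simp [toEuc, Matrix.sum_apply]
  rw [frob_eq_norm, h]
  refine (norm_sum_le _ _).trans ?_
  exact le_of_eq (Finset.sum_congr rfl fun i _ => (frob_eq_norm (f i)).symm)

lemma frob_smul {m n : Type*} [Fintype m] [Fintype n] (r : ℝ) (A : Matrix m n ℝ) :
    frob (r • A) = |r| * frob A := by
  rw [frob_eq_norm, frob_eq_norm]
  have h : toEuc (r • A) = r • toEuc A := by ext p; simp [toEuc]
  rw [h, norm_smul, Real.norm_eq_abs]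



lemma firstCols_apply {n : ℕ} (X : Matrix (Fin n) (Fin n) ℝ) {i : ℕ} (hi : i ≤ n)
    (r : Fin n) (j : Fin i) :
    firstCols X i r j = X r ⟨j.1, lt_of_lt_of_le j.2 hi⟩ := by
  simp only [firstCols, Matrix.of_apply, dif_pos (lt_of_lt_of_le j.2 hi)]

lemma lastCols_apply {n : ℕ} (X : Matrix (Fin n) (Fin n) ℝ) (i : ℕ)
    (r : Fin n) (j : Fin (n - i)) :
    lastCols X i r j = X r ⟨i + j.1, by omega⟩ := by
  have h : i + j.1 < n := by omega
  simp only [lastCols, Matrix.of_apply, dif_pos h]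

lemma sum_split {n i : ℕ} (hi : i ≤ n) (f : Fin n → ℝ) :
    ∑ j, f j = (∑ j : Fin i, f ⟨j.1, lt_of_lt_of_le j.2 hi⟩)
      + ∑ j : Fin (n - i), f ⟨i + j.1, by omega⟩ := by
  set g : ℕ → ℝ := fun t => if h : t < n then f ⟨t, h⟩ else 0 with hg
  have h1 : ∑ j : Fin n, f j = ∑ t ∈ Finset.range n, g t := by
    rw [← Fin.sum_univ_eq_sum_range]
    exact Finset.sum_congr rfl fun j _ => by simp [hg, j.2]
  have h2 : (∑ j : Fin i, f ⟨j.1, lt_of_lt_of_le j.2 hi⟩) = ∑ t ∈ Finset.range i, g t := by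
    rw [← Fin.sum_univ_eq_sum_range]
    refine Finset.sum_congr rfl fun j _ => ?_
    have : (j : ℕ) < n := lt_of_lt_of_le j.2 hi
    simp [hg, this]
  have h3 : (∑ j : Fin (n - i), f ⟨i + j.1, by omega⟩)
      = ∑ t ∈ Finset.range (n - i), g (i + t) := by
    rw [← Fin.sum_univ_eq_sum_range]
    refine Finset.sum_congr rfl fun j _ => ?_
    have : i + (j : ℕ) < n := by omega
    simp [hg, this]
  rw [h1, h2, h3]
  have h4 : ∑ t ∈ Finset.range (n - i), g (i + t) = ∑ t ∈ Finset.Ico i n, g t :=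
    (Finset.sum_Ico_eq_sum_range g i n).symm
  rw [h4, Finset.range_eq_Ico, Finset.range_eq_Ico]
  exact (Finset.sum_Ico_consecutive g (Nat.zero_le i) hi).symm

lemma firstCols_orth {n : ℕ} {X : Matrix (Fin n) (Fin n) ℝ} (hX : Xᵀ * X = 1)
    {i : ℕ} (hi : i ≤ n) : (firstCols X i)ᵀ * firstCols X i = 1 := by
  ext a b
  have ha : (a : ℕ) < n := lt_of_lt_of_le a.2 hi
  have hb : (b : ℕ) < n := lt_of_lt_of_le b.2 hi
  have h2 : (Xᵀ * X) ⟨a.1, ha⟩ ⟨b.1, hb⟩ = (1 : Matrix (Fin n) (Fin n) ℝ) ⟨a.1, ha⟩ ⟨b.1, hb⟩ := by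
    rw [hX]
  simp only [Matrix.mul_apply, Matrix.transpose_apply] at h2 ⊢
  simp only [firstCols_apply X hi]
  rw [h2]
  by_cases hab : a = b
  · subst hab; simp [Matrix.one_apply]
  · have : (⟨a.1, ha⟩ : Fin n) ≠ ⟨b.1, hb⟩ := by
      intro h; exact hab (Fin.ext (by simpa [Fin.ext_iff] using h))
    simp [Matrix.one_apply, this, hab]

lemma cols_complete {n : ℕ} {X : Matrix (Fin n) (Fin n) ℝ} (hX' : X * Xᵀ = 1)
    {i : ℕ} (hi : i ≤ n) :
    firstCols X i * (firstCols X i)ᵀ + lastCols X i * (lastCols X i)ᵀ = 1 := by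
  ext r s
  have h2 : (X * Xᵀ) r s = (1 : Matrix (Fin n) (Fin n) ℝ) r s := by rw [hX']
  simp only [Matrix.mul_apply, Matrix.transpose_apply] at h2
  rw [sum_split hi (fun j => X r j * X s j)] at h2
  simp only [Matrix.add_apply, Matrix.mul_apply, Matrix.transpose_apply,
    firstCols_apply X hi, lastCols_apply X i]
  exact h2

lemma telescope (c : ℕ → ℝ) (a b : ℕ) (hab : a ≤ b + 1) :
    ∑ i ∈ Finset.Icc a b, (c i - c (i + 1)) = c a - c (b + 1) := by
  have h1 : Finset.Icc a b = Finset.Ico a (b + 1) := by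
    ext x; simp
  rw [h1, Finset.sum_Ico_eq_sum_range]
  have h2 : ∑ i ∈ Finset.range (b + 1 - a), (c (a + i) - c (a + (i + 1)))
      = c (a + 0) - c (a + (b + 1 - a)) := by
    exact Finset.sum_range_sub' (fun i => c (a + i)) (b + 1 - a)
  have h3 : a + (b + 1 - a) = b + 1 := by omega
  rw [h3] at h2
  simp only [Nat.add_zero] at h2
  rw [← h2]
  exact Finset.sum_congr rfl fun i _ => by rw [Nat.add_assoc]


lemma S_eq_trace {m n : Type*} [Fintype m] [Fintype n] (A : Matrix m n ℝ) :
    (∑ i, ∑ j, (A i j) ^ 2) = Matrix.trace (Aᵀ * A) := by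
  simp only [Matrix.trace, Matrix.diag, Matrix.mul_apply, Matrix.transpose_apply, sq]
  rw [Finset.sum_comm]

lemma key {n : ℕ} {X Y : Matrix (Fin n) (Fin n) ℝ}
    (hX : Xᵀ * X = 1) (hX' : X * Xᵀ = 1) (hY : Yᵀ * Y = 1)
    {i : ℕ} (hi : i ≤ n) :
    frob (firstCols X i * (firstCols X i)ᵀ - firstCols Y i * (firstCols Y i)ᵀ)
      = Real.sqrt 2 * frob ((firstCols Y i)ᵀ * lastCols X i) := by
  set A := firstCols X i with hA0
  set B := firstCols Y i with hB0
  set L := lastCols X i with hL0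
  have hA : Aᵀ * A = 1 := firstCols_orth hX hi
  have hB : Bᵀ * B = 1 := firstCols_orth hY hi
  have hC : A * Aᵀ + L * Lᵀ = 1 := cols_complete hX' hi
  set P := A * Aᵀ with hP0
  set Q := B * Bᵀ with hQ0
  have hPP : P * P = P := by
    rw [hP0, Matrix.mul_assoc, ← Matrix.mul_assoc Aᵀ A Aᵀ, hA, Matrix.one_mul]
  have hQQ : Q * Q = Q := by
    rw [hQ0, Matrix.mul_assoc, ← Matrix.mul_assoc Bᵀ B Bᵀ, hB, Matrix.one_mul]
  have hPt : Pᵀ = P := by rw [hP0, Matrix.transpose_mul, Matrix.transpose_transpose]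
  have hQt : Qᵀ = Q := by rw [hQ0, Matrix.transpose_mul, Matrix.transpose_transpose]
  have htrP : Matrix.trace P = Matrix.trace (1 : Matrix (Fin i) (Fin i) ℝ) := by
    rw [hP0, Matrix.trace_mul_comm, hA]
  have htrQ : Matrix.trace Q = Matrix.trace (1 : Matrix (Fin i) (Fin i) ℝ) := by
    rw [hQ0, Matrix.trace_mul_comm, hB]
  have hLL : L * Lᵀ = 1 - P := by rw [← hC]; abel
  -- the two squared norms via traces
  have hS1 : (∑ r, ∑ s, ((P - Q) r s) ^ 2)
      = 2 * Matrix.trace (1 : Matrix (Fin i) (Fin i) ℝ) - 2 * Matrix.trace (P * Q) := by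
    rw [S_eq_trace]
    rw [Matrix.transpose_sub, hPt, hQt, Matrix.sub_mul, Matrix.mul_sub, Matrix.mul_sub,
      Matrix.trace_sub, Matrix.trace_sub, Matrix.trace_sub, hPP, hQQ,
      Matrix.trace_mul_comm Q P, htrP, htrQ]
    ring
  have hS2 : (∑ r, ∑ s, ((Bᵀ * L) r s) ^ 2)
      = Matrix.trace (1 : Matrix (Fin i) (Fin i) ℝ) - Matrix.trace (P * Q) := by
    rw [S_eq_trace]
    have e1 : (Bᵀ * L)ᵀ * (Bᵀ * L) = Lᵀ * (B * (Bᵀ * L)) := by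
      rw [Matrix.transpose_mul, Matrix.transpose_transpose, Matrix.mul_assoc]
    rw [e1, Matrix.trace_mul_comm, ← Matrix.mul_assoc, ← Matrix.mul_assoc,
      Matrix.mul_assoc (B * Bᵀ) L Lᵀ, hLL, ← hQ0]
    rw [Matrix.mul_sub, Matrix.mul_one, Matrix.trace_sub, htrQ, Matrix.trace_mul_comm]
    rw [Matrix.mul_assoc P B Bᵀ, ← hQ0]
  have hfr : frob (P - Q) = Real.sqrt (2 * (∑ r, ∑ s, ((Bᵀ * L) r s) ^ 2)) := by
    rw [frob, hS1, hS2]; ring_nf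
  rw [hfr, Real.sqrt_mul (by norm_num : (0:ℝ) ≤ 2), frob]


lemma abel {n k : ℕ} (hkn : k ≤ n) (X : Matrix (Fin n) (Fin n) ℝ) (c : ℕ → ℝ)
    (hc_last : c (k + 1) = 0) :
    firstCols X k * Matrix.diagonal (fun i : Fin k => c (i.1 + 1)) * (firstCols X k)ᵀ
      = ∑ i ∈ Finset.Icc 1 k, (c i - c (i + 1)) • (firstCols X i * (firstCols X i)ᵀ) := by
  ext r s
  rw [Matrix.sum_apply]
  set a : ℕ → ℝ := fun t => if h : t < n then X r ⟨t, h⟩ * X s ⟨t, h⟩ else 0 with ha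
  have hLHS : (firstCols X k * Matrix.diagonal (fun i : Fin k => c (i.1 + 1))
      * (firstCols X k)ᵀ) r s = ∑ t ∈ Finset.range k, c (t + 1) * a t := by
    rw [← Fin.sum_univ_eq_sum_range (fun t => c (t + 1) * a t) k, Matrix.mul_apply]
    simp only [Matrix.mul_diagonal, Matrix.transpose_apply, firstCols_apply X hkn]
    refine Finset.sum_congr rfl fun j _ => ?_
    have hj : (j : ℕ) < n := lt_of_lt_of_le j.2 hkn
    simp only [ha, dif_pos hj]
    ring
  rw [hLHS]
  have hterm : ∀ i ∈ Finset.Icc 1 k,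
      ((c i - c (i + 1)) • (firstCols X i * (firstCols X i)ᵀ)) r s
        = ∑ t ∈ Finset.range k, (if t < i then (c i - c (i + 1)) * a t else 0) := by
    intro i hi
    rw [Finset.mem_Icc] at hi
    have hin : i ≤ n := le_trans hi.2 hkn
    have e1 : ((c i - c (i + 1)) • (firstCols X i * (firstCols X i)ᵀ)) r s
        = (c i - c (i + 1)) * ∑ t ∈ Finset.range i, a t := by
      rw [← Fin.sum_univ_eq_sum_range a i]
      simp only [Matrix.smul_apply, Matrix.mul_apply, Matrix.transpose_apply,
        firstCols_apply X hin, smul_eq_mul]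
      congr 1
      refine Finset.sum_congr rfl fun j _ => ?_
      have hj : (j : ℕ) < n := lt_of_lt_of_le j.2 hin
      simp only [ha, dif_pos hj]
    rw [e1, Finset.mul_sum]
    have hf : Finset.filter (fun t => t < i) (Finset.range k) = Finset.range i := by
      ext t; simp only [Finset.mem_filter, Finset.mem_range]; omega
    rw [← hf, Finset.sum_filter]
  rw [Finset.sum_congr rfl hterm, Finset.sum_comm]
  refine Finset.sum_congr rfl fun t ht => ?_
  rw [Finset.mem_range] at ht
  have e2 : ∑ i ∈ Finset.Icc 1 k, (if t < i then (c i - c (i + 1)) * a t else 0)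
      = (∑ i ∈ Finset.Icc (t + 1) k, (c i - c (i + 1))) * a t := by
    rw [← Finset.sum_filter]
    have hf2 : Finset.filter (fun i => t < i) (Finset.Icc 1 k) = Finset.Icc (t + 1) k := by
      ext x; simp only [Finset.mem_filter, Finset.mem_Icc]; omega
    rw [hf2, Finset.sum_mul]
  rw [e2, telescope c (t + 1) k (by omega), hc_last, sub_zero]

end Aux

theorem stmt11 {n k : ℕ} (hn : 1 ≤ n) (hk : 1 ≤ k) (hkn : k ≤ n)
    (X Y : Matrix (Fin n) (Fin n) ℝ)
    (hX : Xᵀ * X = 1) (hX' : X * Xᵀ = 1)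
    (hY : Yᵀ * Y = 1) (hY' : Y * Yᵀ = 1)
    -- c₁ ≥ c₂ ≥ ⋯ ≥ c_k ≥ c_{k+1} = 0, nonnegative
    (c : ℕ → ℝ)
    (hc_nonneg : ∀ i, 1 ≤ i → i ≤ k → 0 ≤ c i)
    (hc_mono : ∀ i j, 1 ≤ i → i ≤ j → j ≤ k + 1 → c j ≤ c i)
    (hc_last : c (k + 1) = 0) :
    frob (firstCols X k * Matrix.diagonal (fun i : Fin k => c (i.1 + 1)) *
            (firstCols X k)ᵀ -
          firstCols Y k * Matrix.diagonal (fun i : Fin k => c (i.1 + 1)) *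
            (firstCols Y k)ᵀ) ≤
      Real.sqrt 2 * ∑ i ∈ Finset.Icc 1 k,
        (c i - c (i + 1)) * frob ((firstCols Y i)ᵀ * lastCols X i) := by
  rw [Aux.abel hkn X c hc_last, Aux.abel hkn Y c hc_last, ← Finset.sum_sub_distrib]
  have hrw : ∀ i ∈ Finset.Icc 1 k,
      (c i - c (i + 1)) • (firstCols X i * (firstCols X i)ᵀ)
        - (c i - c (i + 1)) • (firstCols Y i * (firstCols Y i)ᵀ)
      = (c i - c (i + 1)) •
          (firstCols X i * (firstCols X i)ᵀ - firstCols Y i * (firstCols Y i)ᵀ) :=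
    fun i _ => (smul_sub _ _ _).symm
  rw [Finset.sum_congr rfl hrw]
  refine (Aux.frob_sum_le _ _).trans ?_
  rw [Finset.mul_sum]
  refine le_of_eq (Finset.sum_congr rfl fun i hi => ?_)
  rw [Finset.mem_Icc] at hi
  have h1 : 0 ≤ c i - c (i + 1) :=
    sub_nonneg.mpr (hc_mono i (i + 1) hi.1 (Nat.le_succ i) (by omega))
  rw [Aux.frob_smul, abs_of_nonneg h1, Aux.key hX hX' hY (le_trans hi.2 hkn)]
  ring
end
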